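/- For all d ∈ ℕ, all convex bodies K ⊂ ℝᵈ and all δ ≤ 8^{−d}, the convex floating body K_δ is nonempty and the logarithmic Hausdorff distance satisfies d_𝔏(K, K_δ) ≤ 1 + 8·δ^{1/d}. -/

import Mathlib

open MeasureTheory Metric Set
open scoped RealInnerProductSpace ENNReal Pointwise

noncomputable section

/-- Euclidean space `ℝᵈ`. -/
abbrev Euc (d : ℕ) := EuclideanSpace ℝ (Fin d)

/-- A convex body: a compact convex set with nonempty interior. -/
def IsConvexBody {d : ℕ} (K : Set (Euc d)) : Prop :=
  IsCompact K ∧ Convex ℝ K ∧ (interior K).Nonempty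

/-- The convex floating body `K_δ`. -/
def floatingBody {d : ℕ} (K : Set (Euc d)) (δ : ℝ) : Set (Euc d) :=
  ⋂₀ {H : Set (Euc d) | ∃ θ : Euc d, ∃ t : ℝ, ‖θ‖ = 1 ∧
      H = {x : Euc d | t ≤ ⟪x, θ⟫} ∧
      ENNReal.ofReal (1 - δ) * volume K ≤ volume (H ∩ K)}

/-- The logarithmic Hausdorff distance
`d_𝔏(K,L) = inf {λ ≥ 1 : ∃ x ∈ int(K ∩ L), λ⁻¹(K−x)+x ⊆ L ⊆ λ(K−x)+x}`. -/
def logHausdorffDist {d : ℕ} (K L : Set (Euc d)) : ℝ :=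
  sInf {lam : ℝ | 1 ≤ lam ∧ ∃ x ∈ interior (K ∩ L),
    (fun y => lam⁻¹ • (y - x) + x) '' K ⊆ L ∧ L ⊆ (fun y => lam • (y - x) + x) '' K}

namespace FloatingBodyAux

open Filter Module
open scoped Topology

variable {d : ℕ} {K : Set (Euc d)}

lemma linφ (θ : Euc d) : IsLinearMap ℝ (fun y : Euc d => ⟪y, θ⟫) :=
  ⟨fun a b => inner_add_left a b θ, fun c a => real_inner_smul_left a θ c⟩

lemma contφ (θ : Euc d) : Continuous (fun y : Euc d => ⟪y, θ⟫) :=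
  continuous_id.inner continuous_const

lemma isClosed_capLE (θ : Euc d) (c : ℝ) : IsClosed {y : Euc d | ⟪y, θ⟫ ≤ c} :=
  isClosed_le (contφ θ) continuous_const

lemma isClosed_capGE (θ : Euc d) (c : ℝ) : IsClosed {y : Euc d | c ≤ ⟪y, θ⟫} :=
  isClosed_le continuous_const (contφ θ)

lemma convex_capLE (θ : Euc d) (c : ℝ) : Convex ℝ {y : Euc d | ⟪y, θ⟫ ≤ c} :=
  convex_halfSpace_le (linφ θ) c

lemma convex_capGE (θ : Euc d) (c : ℝ) : Convex ℝ {y : Euc d | c ≤ ⟪y, θ⟫} :=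
  convex_halfSpace_ge (linφ θ) c

/-- A hyperplane has measure zero. -/
lemma vol_hyperplane {θ : Euc d} (hθ : θ ≠ 0) (c : ℝ) :
    volume {y : Euc d | ⟪y, θ⟫ = c} = 0 := by
  set f : Euc d →ₗ[ℝ] ℝ := IsLinearMap.mk' _ (linφ θ)
  have hfθ : ∀ y, f y = ⟪y, θ⟫ := fun y => rfl
  set y₀ : Euc d := (c / ‖θ‖ ^ 2) • θ with hy₀def
  have hy₀ : ⟪y₀, θ⟫ = c := by
    have hn : ‖θ‖ ^ 2 ≠ 0 := by
      have := norm_pos_iff.mpr hθ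
      positivity
    rw [hy₀def, real_inner_smul_left, real_inner_self_eq_norm_sq,
      div_mul_cancel₀ _ hn]
  set S : AffineSubspace ℝ (Euc d) := AffineSubspace.mk' y₀ (LinearMap.ker f) with hS
  have hsub : {y : Euc d | ⟪y, θ⟫ = c} ⊆ (S : Set (Euc d)) := by
    intro y hy
    rw [SetLike.mem_coe, hS, AffineSubspace.mem_mk', LinearMap.mem_ker]
    show f (y - y₀) = 0
    rw [map_sub, hfθ, hfθ, hy₀, hy.out, sub_self]
  have hne : S ≠ ⊤ := by
    intro h
    have : y₀ + θ ∈ S := h ▸ AffineSubspace.mem_top ℝ _ _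
    rw [hS, AffineSubspace.mem_mk', LinearMap.mem_ker] at this
    have : f (y₀ + θ - y₀) = 0 := this
    rw [add_sub_cancel_left, hfθ, real_inner_self_eq_norm_sq] at this
    have hn0 : ‖θ‖ = 0 := by nlinarith [norm_nonneg θ]
    exact hθ (norm_eq_zero.mp hn0)
  exact measure_mono_null hsub (MeasureTheory.Measure.addHaar_affineSubspace volume S hne)

lemma subset_closure_interior (hc : Convex ℝ K) (hne : (interior K).Nonempty) :
    K ⊆ closure (interior K) := by
  obtain ⟨a, ha⟩ := hne
  intro y hy
  have hseq : ∀ n : ℕ, y + ((n : ℝ) + 1)⁻¹ • (a - y) ∈ interior K := by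
    intro n
    apply hc.add_smul_sub_mem_interior hy ha
    constructor
    · positivity
    · rw [inv_le_one_iff₀]; right; linarith [Nat.cast_nonneg (α := ℝ) n]
  have htend : Tendsto (fun n : ℕ => y + ((n : ℝ) + 1)⁻¹ • (a - y)) atTop (𝓝 y) := by
    have h1 : Tendsto (fun n : ℕ => ((n : ℝ) + 1)⁻¹) atTop (𝓝 0) :=
      tendsto_one_div_add_atTop_nhds_zero_nat.congr (by intro n; rw [one_div])
    have : Tendsto (fun n : ℕ => y + ((n : ℝ) + 1)⁻¹ • (a - y)) atTop
        (𝓝 (y + (0 : ℝ) • (a - y))) :=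
      tendsto_const_nhds.add (h1.smul_const _)
    simpa using this
  exact mem_closure_of_tendsto htend (Eventually.of_forall hseq)

lemma volume_pos (hK : IsConvexBody K) : volume K ≠ 0 := by
  have h1 : 0 < volume (interior K) := IsOpen.measure_pos volume isOpen_interior hK.2.2
  exact fun h => absurd (measure_mono_null interior_subset h) (by simpa using h1.ne')

/-- Helly-based centerpoint, without interiority. -/
lemma exists_centerpoint0 (hK : IsConvexBody K) :
    ∃ x ∈ K, ∀ θ : Euc d,
      volume K ≤ ((d : ℝ≥0∞) + 1) * volume (K ∩ {y | ⟪y, θ⟫ ≤ ⟪x, θ⟫}) := by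
  set V := volume K with hV
  have hV0 : V ≠ 0 := by
    have h1 : 0 < volume (interior K) := IsOpen.measure_pos volume isOpen_interior hK.2.2
    exact fun h => absurd (measure_mono_null interior_subset h) (by simpa using h1.ne')
  have hVt : V ≠ ⊤ := hK.1.measure_lt_top.ne
  set ι := {p : Euc d × ℝ // (d : ℝ≥0∞) * V < ((d : ℝ≥0∞) + 1) *
      volume (K ∩ {y : Euc d | p.2 ≤ ⟪y, p.1⟫})} with hι
  set F : ι → Set (Euc d) := fun i => K ∩ {y : Euc d | i.1.2 ≤ ⟪y, i.1.1⟫} with hF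
  -- each measure identity
  have hmeas : ∀ (θ : Euc d) (c : ℝ),
      volume (K ∩ {y : Euc d | c ≤ ⟪y, θ⟫}) + volume (K \ {y : Euc d | c ≤ ⟪y, θ⟫}) = V :=
    fun θ c => measure_inter_add_diff K (isClosed_capGE θ c).measurableSet
  -- complement bound
  classical
  have hcompl : ∀ i : ι, ((d : ℝ≥0∞) + 1) * volume (K \ {y : Euc d | i.1.2 ≤ ⟪y, i.1.1⟫}) < V := by
    intro i
    by_contra hcon
    push_neg at hcon
    have hi := i.2
    have hEq := hmeas i.1.1 i.1.2
    have h1 : ((d : ℝ≥0∞) + 1) * V =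
        ((d : ℝ≥0∞) + 1) * volume (K ∩ {y : Euc d | i.1.2 ≤ ⟪y, i.1.1⟫}) +
        ((d : ℝ≥0∞) + 1) * volume (K \ {y : Euc d | i.1.2 ≤ ⟪y, i.1.1⟫}) := by
      rw [← mul_add, hEq]
    have h2 : ((d : ℝ≥0∞) + 1) * V < ((d : ℝ≥0∞) + 1) * V := by
      calc ((d : ℝ≥0∞) + 1) * V = (d : ℝ≥0∞) * V + V := by ring
        _ < ((d : ℝ≥0∞) + 1) * volume (K ∩ {y : Euc d | i.1.2 ≤ ⟪y, i.1.1⟫}) +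
            ((d : ℝ≥0∞) + 1) * volume (K \ {y : Euc d | i.1.2 ≤ ⟪y, i.1.1⟫}) := by
            exact ENNReal.add_lt_add_of_lt_of_le hVt hi hcon
        _ = ((d : ℝ≥0∞) + 1) * V := h1.symm
    exact absurd h2 (lt_irrefl _)
  -- finite subfamilies intersect
  have h_inter : ∀ I : Finset ι, I.card ≤ finrank ℝ (Euc d) + 1 → (⋂ i ∈ I, F i).Nonempty := by
    intro I hcard
    rcases I.eq_empty_or_nonempty with rfl | hIne
    · simp
    rw [finrank_euclideanSpace_fin] at hcard
    -- volume of the union of complements is < V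
    have hdiff : K \ (⋂ i ∈ I, F i) ⊆ ⋃ i ∈ I, (K \ F i) := by
      intro z hz
      rw [mem_diff, mem_iInter₂] at hz
      push_neg at hz
      obtain ⟨i, hiI, hiz⟩ := hz.2
      exact mem_biUnion hiI ⟨hz.1, hiz⟩
    have hterm : ∀ i : ι, volume (K \ F i) < V / ((d : ℝ≥0∞) + 1) := by
      intro i
      rw [ENNReal.lt_div_iff_mul_lt (Or.inl (by simp)) (Or.inl (by simp))]
      have hKF : K \ F i = K \ {y : Euc d | i.1.2 ≤ ⟪y, i.1.1⟫} := by
        rw [hF]; exact Set.diff_self_inter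
      rw [hKF, mul_comm]
      exact hcompl i
    obtain ⟨i₀, hi₀⟩ := hIne
    have hrest : ∑ i ∈ I.erase i₀, volume (K \ F i) ≤ (d : ℝ≥0∞) * (V / ((d : ℝ≥0∞) + 1)) := by
      calc ∑ i ∈ I.erase i₀, volume (K \ F i)
          ≤ (I.erase i₀).card • (V / ((d : ℝ≥0∞) + 1)) :=
            Finset.sum_le_card_nsmul _ _ _ (fun i _ => (hterm i).le)
        _ ≤ d • (V / ((d : ℝ≥0∞) + 1)) := by
            apply nsmul_le_nsmul_left zero_le
            rw [Finset.card_erase_of_mem hi₀]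
            omega
        _ = (d : ℝ≥0∞) * (V / ((d : ℝ≥0∞) + 1)) := nsmul_eq_mul d _
    have hrest_ne : ∑ i ∈ I.erase i₀, volume (K \ F i) ≠ ⊤ :=
      ne_top_of_le_ne_top (ENNReal.mul_ne_top (by simp)
        (ENNReal.div_lt_top hVt (by simp)).ne) hrest
    have hbound : volume (K \ (⋂ i ∈ I, F i)) < V := by
      calc volume (K \ (⋂ i ∈ I, F i)) ≤ ∑ i ∈ I, volume (K \ F i) :=
            le_trans (measure_mono hdiff) (measure_biUnion_finset_le I _)
        _ = volume (K \ F i₀) + ∑ i ∈ I.erase i₀, volume (K \ F i) :=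
            (Finset.add_sum_erase I _ hi₀).symm
        _ < V / ((d : ℝ≥0∞) + 1) + (d : ℝ≥0∞) * (V / ((d : ℝ≥0∞) + 1)) :=
            ENNReal.add_lt_add_of_lt_of_le hrest_ne (hterm i₀) hrest
        _ = ((d : ℝ≥0∞) + 1) * (V / ((d : ℝ≥0∞) + 1)) := by ring
        _ ≤ V := ENNReal.mul_div_le
    have hKsub : volume (K ∩ (⋂ i ∈ I, F i)) ≠ 0 := by
      have hmeasI : MeasurableSet (⋂ i ∈ I, F i) := by
        apply Finset.measurableSet_biInter
        intro i _
        exact (hK.1.inter_right (isClosed_capGE i.1.1 i.1.2)).measurableSet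
      have := measure_inter_add_diff (μ := volume) K hmeasI
      intro h0
      rw [h0, zero_add] at this
      exact absurd (this ▸ hbound) (lt_irrefl _)
    obtain ⟨z, hz⟩ := nonempty_of_measure_ne_zero hKsub
    exact ⟨z, hz.2⟩
  -- apply Helly
  have hHelly := Convex.helly_theorem_compact' (𝕜 := ℝ) (F := F)
    (fun i => (hK.2.1.inter (convex_capGE i.1.1 i.1.2)))
    (fun i => hK.1.inter_right (isClosed_capGE i.1.1 i.1.2)) h_inter
  obtain ⟨x, hx⟩ := hHelly
  have hxF : ∀ i : ι, x ∈ F i := fun i => (mem_iInter.mp hx) i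
  have hi0 : (d : ℝ≥0∞) * V < ((d : ℝ≥0∞) + 1) *
      volume (K ∩ {y : Euc d | (0:ℝ) ≤ ⟪y, (0 : Euc d)⟫}) := by
    have : {y : Euc d | (0:ℝ) ≤ ⟪y, (0 : Euc d)⟫} = univ := by
      ext y; simp [inner_zero_right]
    rw [this, inter_univ]
    calc (d : ℝ≥0∞) * V < ((d : ℝ≥0∞) + 1) * V := by
          rw [ENNReal.mul_lt_mul_iff_left hV0 hVt]
          exact ENNReal.lt_add_right (by simp) one_ne_zero
      _ = _ := rfl
  have hxK : x ∈ K := (hxF ⟨((0 : Euc d), (0:ℝ)), hi0⟩).1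
  refine ⟨x, hxK, ?_⟩
  intro θ
  by_contra hcon
  push_neg at hcon
  set A := K ∩ {y : Euc d | ⟪y, θ⟫ ≤ ⟪x, θ⟫} with hA
  -- A + complement
  have hAm := measure_inter_add_diff (μ := volume) K (isClosed_capLE θ ⟪x, θ⟫).measurableSet
  -- d V < (d+1) vol (K \ capLE)
  have hstep : (d : ℝ≥0∞) * V < ((d : ℝ≥0∞) + 1) * volume (K \ {y : Euc d | ⟪y, θ⟫ ≤ ⟪x, θ⟫}) := by
    by_contra hcon2
    push_neg at hcon2
    have h2 : ((d : ℝ≥0∞) + 1) * V < ((d : ℝ≥0∞) + 1) * V := by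
      calc ((d : ℝ≥0∞) + 1) * V
          = ((d : ℝ≥0∞) + 1) * volume A + ((d : ℝ≥0∞) + 1) * volume (K \ {y : Euc d | ⟪y, θ⟫ ≤ ⟪x, θ⟫}) := by
            rw [← mul_add, hAm]
        _ < V + (d : ℝ≥0∞) * V :=
            ENNReal.add_lt_add_of_lt_of_le
              (ne_top_of_le_ne_top (ENNReal.mul_ne_top (by simp) hVt)
                (mul_le_mul_right (measure_mono diff_subset) ((d : ℝ≥0∞) + 1))) hcon hcon2
        _ = ((d : ℝ≥0∞) + 1) * V := by ring
    exact absurd h2 (lt_irrefl _)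
  -- monotone union
  set B : ℕ → Set (Euc d) := fun n => K ∩ {y : Euc d | ⟪x, θ⟫ + 1/((n:ℝ)+1) ≤ ⟪y, θ⟫} with hB
  have hBU : ⋃ n, B n = K \ {y : Euc d | ⟪y, θ⟫ ≤ ⟪x, θ⟫} := by
    ext z
    simp only [hB, mem_iUnion, mem_inter_iff, mem_diff, mem_setOf_eq, not_le]
    constructor
    · rintro ⟨n, hzK, hzn⟩
      refine ⟨hzK, ?_⟩
      have : 0 < 1/((n:ℝ)+1) := by positivity
      linarith
    · rintro ⟨hzK, hzgt⟩
      obtain ⟨n, hn⟩ := exists_nat_one_div_lt (sub_pos.mpr hzgt)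
      exact ⟨n, hzK, by linarith⟩
  have hBmono : Monotone B := by
    intro n m hnm
    apply inter_subset_inter_right
    intro z hz
    have h1 : 1/((m:ℝ)+1) ≤ 1/((n:ℝ)+1) := by
      apply one_div_le_one_div_of_le (by positivity)
      exact_mod_cast add_le_add_left (Nat.cast_le.mpr hnm) 1
    simp only [mem_setOf_eq] at hz ⊢
    linarith
  have hBvol : volume (K \ {y : Euc d | ⟪y, θ⟫ ≤ ⟪x, θ⟫}) = ⨆ n, volume (B n) := by
    rw [← hBU]
    exact Directed.measure_iUnion hBmono.directed_le
  rw [hBvol, ENNReal.mul_iSup, lt_iSup_iff] at hstep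
  obtain ⟨n, hn⟩ := hstep
  have hidx : (d : ℝ≥0∞) * V < ((d : ℝ≥0∞) + 1) *
      volume (K ∩ {y : Euc d | (⟪x, θ⟫ + 1/((n:ℝ)+1)) ≤ ⟪y, θ⟫}) := hn
  have hxB := hxF ⟨(θ, ⟪x, θ⟫ + 1/((n:ℝ)+1)), hidx⟩
  have : ⟪x, θ⟫ + 1/((n:ℝ)+1) ≤ ⟪x, θ⟫ := hxB.2
  have : (0:ℝ) < 1/((n:ℝ)+1) := by positivity
  linarith

lemma centerpoint_mem_interior (hK : IsConvexBody K) {x : Euc d} (hxK : x ∈ K)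
    (hcp : ∀ θ : Euc d,
      volume K ≤ ((d : ℝ≥0∞) + 1) * volume (K ∩ {y | ⟪y, θ⟫ ≤ ⟪x, θ⟫})) :
    x ∈ interior K := by
  by_contra hxint
  obtain ⟨f, hf⟩ := geometric_hahn_banach_open_point (hK.2.1.interior) isOpen_interior hxint
  have hle : ∀ y ∈ K, f y ≤ f x := by
    intro y hy
    have h1 : interior K ⊆ {z : Euc d | f z ≤ f x} := fun a ha => (hf a ha).le
    have h2 : closure (interior K) ⊆ {z : Euc d | f z ≤ f x} :=
      closure_minimal h1 (isClosed_le f.continuous continuous_const)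
    exact h2 (subset_closure_interior hK.2.1 hK.2.2 hy)
  set θ₀ : Euc d := (InnerProductSpace.toDual ℝ (Euc d)).symm f with hθ₀def
  have hθ₀app : ∀ y : Euc d, ⟪θ₀, y⟫ = f y := fun y => InnerProductSpace.toDual_symm_apply
  have hθ₀app' : ∀ y : Euc d, ⟪y, θ₀⟫ = f y := fun y => by
    rw [real_inner_comm]; exact hθ₀app y
  have hθ₀ : θ₀ ≠ 0 := by
    intro h0
    obtain ⟨a₀, ha₀⟩ := hK.2.2
    have h1 : f a₀ = 0 := by rw [← hθ₀app, h0, inner_zero_left]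
    have h2 : f x = 0 := by rw [← hθ₀app, h0, inner_zero_left]
    have := hf a₀ ha₀
    rw [h1, h2] at this
    exact lt_irrefl _ this
  have hsub : K ∩ {y : Euc d | ⟪y, -θ₀⟫ ≤ ⟪x, -θ₀⟫} ⊆ {y : Euc d | ⟪y, θ₀⟫ = ⟪x, θ₀⟫} := by
    rintro y ⟨hyK, hy⟩
    simp only [mem_setOf_eq, inner_neg_right, neg_le_neg_iff] at hy
    have h1 : f y ≤ f x := hle y hyK
    have h2 : f x ≤ f y := by
      rw [← hθ₀app' x, ← hθ₀app' y]; exact hy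
    show ⟪y, θ₀⟫ = ⟪x, θ₀⟫
    rw [hθ₀app' y, hθ₀app' x]
    linarith
  have hzero : volume (K ∩ {y : Euc d | ⟪y, -θ₀⟫ ≤ ⟪x, -θ₀⟫}) = 0 :=
    measure_mono_null hsub (vol_hyperplane hθ₀ _)
  have := hcp (-θ₀)
  rw [hzero, mul_zero] at this
  exact volume_pos hK (le_antisymm this zero_le)

/-- Centerpoint theorem: there is an interior point `x` such that every halfspace
"below" `x` captures at least a `1/(d+1)` fraction of the volume of `K`. -/
lemma exists_centerpoint (hK : IsConvexBody K) :
    ∃ x, x ∈ interior K ∧ ∀ θ : Euc d,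
      volume K ≤ ((d : ℝ≥0∞) + 1) * volume (K ∩ {y | ⟪y, θ⟫ ≤ ⟪x, θ⟫}) := by
  obtain ⟨x, hxK, hcp⟩ := exists_centerpoint0 hK
  exact ⟨x, centerpoint_mem_interior hK hxK hcp, hcp⟩

/-- Cone scaling bound: scaling a cap towards a bottom point. -/
lemma cone_bound (hconv : Convex ℝ K) {p : Euc d} (hp : p ∈ K) (θ : Euc d)
    {r : ℝ} (hr0 : 0 < r) (hr1 : r ≤ 1) (c : ℝ) :
    ENNReal.ofReal (r ^ d) * volume (K ∩ {y | ⟪y, θ⟫ ≤ c}) ≤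
      volume (K ∩ {y | ⟪y, θ⟫ ≤ ⟪p, θ⟫ + r * (c - ⟪p, θ⟫)}) := by
  set A := K ∩ {y : Euc d | ⟪y, θ⟫ ≤ c} with hA
  have hsub : p +ᵥ (r • ((-p) +ᵥ A)) ⊆ K ∩ {y : Euc d | ⟪y, θ⟫ ≤ ⟪p, θ⟫ + r * (c - ⟪p, θ⟫)} := by
    rintro z ⟨w, ⟨v, ⟨a, ha, rfl⟩, rfl⟩, rfl⟩
    have haK : a ∈ K := ha.1
    have hac : ⟪a, θ⟫ ≤ c := ha.2
    constructor
    · have : (1 - r) • p + r • a ∈ K := hconv hp haK (by linarith) hr0.le (by ring)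
      convert this using 1
      show p + r • (-p + a) = _
      module
    · show ⟪p + r • (-p + a), θ⟫ ≤ _
      rw [inner_add_left, real_inner_smul_left, inner_add_left, inner_neg_left]
      nlinarith
  calc ENNReal.ofReal (r ^ d) * volume A
      = volume (p +ᵥ (r • ((-p) +ᵥ A))) := by
        rw [measure_vadd, MeasureTheory.Measure.addHaar_smul, measure_vadd,
          finrank_euclideanSpace_fin, abs_of_pos (by positivity)]
    _ ≤ _ := measure_mono hsub

/-- The main per-halfspace estimate. -/
lemma main_halfspace (hK : IsConvexBody K) (hd : 0 < d) {δ : ℝ} (hδ0 : 0 < δ)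
    (hδ : δ ≤ (8 : ℝ) ^ (-(d : ℝ))) {x : Euc d} (hxK : x ∈ K)
    (hcp : ∀ θ : Euc d,
      volume K ≤ ((d : ℝ≥0∞) + 1) * volume (K ∩ {y | ⟪y, θ⟫ ≤ ⟪x, θ⟫}))
    {θ : Euc d} (hθ : ‖θ‖ = 1) {t : ℝ}
    (hH : ENNReal.ofReal (1 - δ) * volume K ≤ volume ({w : Euc d | t ≤ ⟪w, θ⟫} ∩ K))
    {y : Euc d} (hy : y ∈ K) :
    t ≤ ⟪(1 + 8 * δ ^ ((d : ℝ)⁻¹))⁻¹ • (y - x) + x, θ⟫ := by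
  set V := volume K with hV
  have hV0 : V ≠ 0 := volume_pos hK
  have hVt : V ≠ ⊤ := hK.1.measure_lt_top.ne
  set ε : ℝ := δ ^ ((d : ℝ)⁻¹) with hε
  have hε0 : 0 < ε := Real.rpow_pos_of_pos hδ0 _
  have hdR : (0:ℝ) < d := by exact_mod_cast hd
  have hε8 : ε ≤ 8⁻¹ := by
    have h1 : ε ≤ ((8:ℝ) ^ (-(d:ℝ))) ^ ((d:ℝ)⁻¹) :=
      Real.rpow_le_rpow hδ0.le hδ (by positivity)
    have h2 : ((8:ℝ) ^ (-(d:ℝ))) ^ ((d:ℝ)⁻¹) = 8⁻¹ := by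
      rw [← Real.rpow_mul (by norm_num : (0:ℝ) ≤ 8), neg_mul,
        mul_inv_cancel₀ (ne_of_gt hdR), Real.rpow_neg_one]
    rw [h2] at h1
    exact h1
  have hδ1 : δ ≤ 1 := le_trans hδ
    (Real.rpow_le_one_of_one_le_of_nonpos (by norm_num) (neg_nonpos.mpr (Nat.cast_nonneg d)))
  have hθ0 : θ ≠ 0 := fun h => by rw [h, norm_zero] at hθ; norm_num at hθ
  obtain ⟨p, hpK, hpmin⟩ := hK.1.exists_isMinOn ⟨x, hxK⟩ (contφ θ).continuousOn
  set m := ⟪p, θ⟫ with hm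
  have hmle : ∀ z ∈ K, m ≤ ⟪z, θ⟫ := fun z hz => hpmin hz
  set a := ⟪x, θ⟫ - m with ha
  have ha0 : 0 < a := by
    rcases lt_or_ge m ⟪x, θ⟫ with h | h
    · rw [ha]; linarith
    · exfalso
      have hsub : K ∩ {z : Euc d | ⟪z, θ⟫ ≤ ⟪x, θ⟫} ⊆ {z : Euc d | ⟪z, θ⟫ = m} := by
        rintro z ⟨hzK, hz⟩
        exact le_antisymm (le_trans hz h) (hmle z hzK)
      have hzero := measure_mono_null hsub (vol_hyperplane hθ0 m)
      have hc := hcp θ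
      rw [hzero, mul_zero] at hc
      exact hV0 (le_antisymm hc zero_le)
  -- cap volume bound
  have hcap : volume (K ∩ {w : Euc d | ⟪w, θ⟫ < t}) ≤ ENNReal.ofReal δ * V := by
    have hmeasH := measure_inter_add_diff (μ := volume) K (isClosed_capGE θ t).measurableSet
    have hdiffeq : K \ {w : Euc d | t ≤ ⟪w, θ⟫} = K ∩ {w : Euc d | ⟪w, θ⟫ < t} := by
      ext z; simp [Set.mem_diff, not_le]
    have hHK : ENNReal.ofReal (1 - δ) * V ≤ volume (K ∩ {w : Euc d | t ≤ ⟪w, θ⟫}) := by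
      rw [inter_comm]; exact hH
    have hsplit : ENNReal.ofReal (1 - δ) * V + ENNReal.ofReal δ * V = V := by
      rw [← add_mul, ← ENNReal.ofReal_add (by linarith) hδ0.le]
      norm_num
    have hfin : ENNReal.ofReal (1 - δ) * V + volume (K ∩ {w : Euc d | ⟪w, θ⟫ < t}) ≤
        ENNReal.ofReal (1 - δ) * V + ENNReal.ofReal δ * V := by
      calc ENNReal.ofReal (1 - δ) * V + volume (K ∩ {w : Euc d | ⟪w, θ⟫ < t})
          = ENNReal.ofReal (1 - δ) * V + volume (K \ {w : Euc d | t ≤ ⟪w, θ⟫}) := by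
            rw [hdiffeq]
        _ ≤ volume (K ∩ {w : Euc d | t ≤ ⟪w, θ⟫}) + volume (K \ {w : Euc d | t ≤ ⟪w, θ⟫}) :=
            add_le_add_left hHK _
        _ = V := hmeasH.trans hV.symm
        _ = ENNReal.ofReal (1 - δ) * V + ENNReal.ofReal δ * V := hsplit.symm
    exact (ENNReal.add_le_add_iff_left (ENNReal.mul_ne_top ENNReal.ofReal_ne_top hVt)).mp hfin
  -- height bound : t - m ≤ 2 ε a
  have hheight : t - m ≤ 2 * ε * a := by
    by_contra hcon
    push_neg at hcon
    set r : ℝ := min ((1 + 2*ε)/2) (((t - m)/a + 2*ε)/2) with hr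
    have h2ε1 : 2*ε < 1 := by linarith
    have hcon' : 2*ε < (t - m)/a := by rw [lt_div_iff₀ ha0]; linarith
    have hrgt : 2*ε < r := lt_min (by linarith) (by linarith)
    have hr0 : 0 < r := lt_trans (by positivity) hrgt
    have hr1 : r ≤ 1 := le_trans (min_le_left _ _) (by linarith)
    have hrlt : m + r * a < t := by
      have h1 : r < (t - m)/a := lt_of_le_of_lt (min_le_right _ _) (by linarith)
      have h2 : r * a < t - m := by rw [← lt_div_iff₀ ha0]; exact h1
      linarith
    have hcone := cone_bound hK.2.1 hpK θ hr0 hr1 ⟪x, θ⟫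
    have hmr : ⟪p, θ⟫ + r * (⟪x, θ⟫ - ⟪p, θ⟫) = m + r * a := by rw [hm, ha]
    rw [hmr] at hcone
    have hsubcap : K ∩ {z : Euc d | ⟪z, θ⟫ ≤ m + r * a} ⊆ K ∩ {w : Euc d | ⟪w, θ⟫ < t} :=
      inter_subset_inter_right _ (fun z hz => lt_of_le_of_lt hz hrlt)
    have hchain : ENNReal.ofReal (r^d) * V ≤ (((d : ℝ≥0∞) + 1) * ENNReal.ofReal δ) * V := by
      calc ENNReal.ofReal (r^d) * V
          ≤ ENNReal.ofReal (r^d) * (((d : ℝ≥0∞) + 1) *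
              volume (K ∩ {z : Euc d | ⟪z, θ⟫ ≤ ⟪x, θ⟫})) := mul_le_mul_right (hcp θ) _
        _ = ((d : ℝ≥0∞) + 1) * (ENNReal.ofReal (r^d) *
              volume (K ∩ {z : Euc d | ⟪z, θ⟫ ≤ ⟪x, θ⟫})) := by ring
        _ ≤ ((d : ℝ≥0∞) + 1) * volume (K ∩ {z : Euc d | ⟪z, θ⟫ ≤ m + r * a}) :=
            mul_le_mul_right hcone _
        _ ≤ ((d : ℝ≥0∞) + 1) * (ENNReal.ofReal δ * V) :=
            mul_le_mul_right (le_trans (measure_mono hsubcap) hcap) _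
        _ = (((d : ℝ≥0∞) + 1) * ENNReal.ofReal δ) * V := by ring
    have hofr : ((d : ℝ≥0∞) + 1) * ENNReal.ofReal δ = ENNReal.ofReal (((d:ℝ) + 1) * δ) := by
      rw [ENNReal.ofReal_mul (by positivity), show ENNReal.ofReal ((d:ℝ) + 1) = (d : ℝ≥0∞) + 1 by
        rw [show ((d:ℝ) + 1) = ((d + 1 : ℕ) : ℝ) by push_cast; ring, ENNReal.ofReal_natCast]
        push_cast; ring]
    have hrd : r^d ≤ ((d:ℝ) + 1) * δ := by
      have h1 := (ENNReal.mul_le_mul_iff_left hV0 hVt).mp hchain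
      rw [hofr] at h1
      exact (ENNReal.ofReal_le_ofReal_iff (by positivity)).mp h1
    have hr2ε : r ≤ 2*ε := by
      rw [← Real.rpow_natCast r d] at hrd
      have h2 := Real.rpow_le_rpow (Real.rpow_nonneg hr0.le _) hrd
        (inv_nonneg.mpr hdR.le)
      rw [← Real.rpow_mul hr0.le, mul_inv_cancel₀ hdR.ne', Real.rpow_one] at h2
      have hsplit2 : (((d:ℝ) + 1) * δ) ^ ((d:ℝ)⁻¹) =
          ((d:ℝ) + 1) ^ ((d:ℝ)⁻¹) * ε := Real.mul_rpow (by positivity) hδ0.le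
      have h2d : ((d:ℝ) + 1) ^ ((d:ℝ)⁻¹) ≤ 2 := by
        have hnat : ((d:ℝ) + 1) ≤ (2:ℝ)^(d:ℕ) := by
          have := Nat.lt_two_pow_self (n := d)
          exact_mod_cast Nat.succ_le_of_lt this
        calc ((d:ℝ) + 1) ^ ((d:ℝ)⁻¹) ≤ ((2:ℝ)^(d:ℕ)) ^ ((d:ℝ)⁻¹) :=
              Real.rpow_le_rpow (by positivity) hnat (by positivity)
          _ = 2 := by
              rw [← Real.rpow_natCast 2 d, ← Real.rpow_mul (by norm_num),
                mul_inv_cancel₀ hdR.ne', Real.rpow_one]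
      calc r ≤ (((d:ℝ) + 1) * δ) ^ ((d:ℝ)⁻¹) := h2
        _ = ((d:ℝ) + 1) ^ ((d:ℝ)⁻¹) * ε := hsplit2
        _ ≤ 2 * ε := mul_le_mul_of_nonneg_right h2d hε0.le
    linarith
  -- final numeric step
  have hinner : ⟪(1 + 8 * ε)⁻¹ • (y - x) + x, θ⟫ =
      (1 + 8 * ε)⁻¹ * (⟪y, θ⟫ - ⟪x, θ⟫) + ⟪x, θ⟫ := by
    rw [inner_add_left, real_inner_smul_left, inner_sub_left]
  rw [hinner]
  have hym : m ≤ ⟪y, θ⟫ := hmle y hy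
  have hlam : 0 < 1 + 8*ε := by linarith
  have hβpos : 0 < (1 + 8*ε)⁻¹ := by positivity
  have hβ : (1 + 8*ε)⁻¹ * (1 + 8*ε) = 1 := inv_mul_cancel₀ hlam.ne'
  have hβle : (1 + 8*ε)⁻¹ ≤ 1 - 2*ε := by nlinarith
  have hmul : (1 + 8*ε)⁻¹ * (m - ⟪x, θ⟫) ≤ (1 + 8*ε)⁻¹ * (⟪y, θ⟫ - ⟪x, θ⟫) :=
    mul_le_mul_of_nonneg_left (by linarith) hβpos.le
  have hma : m - ⟪x, θ⟫ = -a := by rw [ha]; ring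
  have hba : (1 + 8*ε)⁻¹ * a ≤ (1 - 2*ε) * a := mul_le_mul_of_nonneg_right hβle ha0.le
  have hax : m = ⟪x, θ⟫ - a := by rw [ha]; ring
  nlinarith [hmul, hheight]

lemma floatingBody_subset (hK : IsConvexBody K) {δ : ℝ} (hδ0 : 0 < δ) (hδ1 : δ ≤ 1) :
    floatingBody K δ ⊆ K := by
  intro z hz
  by_contra hzK
  obtain ⟨f, u, hfu, hfK⟩ := geometric_hahn_banach_point_closed hK.2.1 hK.1.isClosed hzK
  set θ₀ : Euc d := (InnerProductSpace.toDual ℝ (Euc d)).symm f with hθ₀def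
  have happ : ∀ w : Euc d, ⟪w, θ₀⟫ = f w := fun w => by
    rw [real_inner_comm]; exact InnerProductSpace.toDual_symm_apply
  have hθ₀ : θ₀ ≠ 0 := by
    intro h0
    obtain ⟨b, hb⟩ := hK.2.2
    have h2 : f b = 0 := by rw [← happ b, h0, inner_zero_right]
    have h3 : f z = 0 := by rw [← happ z, h0, inner_zero_right]
    have h4 := hfK b (interior_subset hb)
    linarith
  have hnθ₀ : 0 < ‖θ₀‖ := norm_pos_iff.mpr hθ₀
  set θ : Euc d := ‖θ₀‖⁻¹ • θ₀ with hθdef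
  have hθnorm : ‖θ‖ = 1 := by
    rw [hθdef, norm_smul, norm_inv, norm_norm, inv_mul_cancel₀ hnθ₀.ne']
  have happθ : ∀ w : Euc d, ⟪w, θ⟫ = ‖θ₀‖⁻¹ * f w := fun w => by
    rw [hθdef, real_inner_smul_right, happ]
  set c : ℝ := ‖θ₀‖⁻¹ * u with hc
  have hKH : K ⊆ {w : Euc d | c ≤ ⟪w, θ⟫} := by
    intro w hw
    rw [mem_setOf_eq, happθ, hc]
    exact mul_le_mul_of_nonneg_left (hfK w hw).le (inv_nonneg.mpr hnθ₀.le)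
  have hvol : ENNReal.ofReal (1 - δ) * volume K ≤
      volume ({w : Euc d | c ≤ ⟪w, θ⟫} ∩ K) := by
    have heq : {w : Euc d | c ≤ ⟪w, θ⟫} ∩ K = K := inter_eq_right.mpr hKH
    rw [heq]
    exact mul_le_of_le_one_left zero_le (ENNReal.ofReal_le_one.mpr (by linarith))
  have hzH := hz {w : Euc d | c ≤ ⟪w, θ⟫} ⟨θ, c, hθnorm, rfl, hvol⟩
  rw [mem_setOf_eq, happθ, hc] at hzH
  have hlt : ‖θ₀‖⁻¹ * f z < ‖θ₀‖⁻¹ * u :=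
    mul_lt_mul_of_pos_left hfu (inv_pos.mpr hnθ₀)
  linarith

end FloatingBodyAux

open FloatingBodyAux in
/-- For every convex body `K ⊆ ℝᵈ` and every `δ ≤ 8^{-d}`, the floating body `K_δ`
is nonempty and `d_𝔏(K, K_δ) ≤ 1 + 8 δ^{1/d}`. -/
theorem logHausdorffDist_floatingBody_le
    (d : ℕ) (K : Set (Euc d)) (hK : IsConvexBody K)
    (δ : ℝ) (hδ0 : 0 < δ) (hδ : δ ≤ (8 : ℝ) ^ (-(d : ℝ))) :
    (floatingBody K δ).Nonempty ∧
      logHausdorffDist K (floatingBody K δ) ≤ 1 + 8 * δ ^ ((d : ℝ)⁻¹) := by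
  have hbdd : BddBelow {lam : ℝ | 1 ≤ lam ∧ ∃ x ∈ interior (K ∩ floatingBody K δ),
      (fun y => lam⁻¹ • (y - x) + x) '' K ⊆ floatingBody K δ ∧
        floatingBody K δ ⊆ (fun y => lam • (y - x) + x) '' K} :=
    ⟨1, fun lam hl => hl.1⟩
  rcases Nat.eq_zero_or_pos d with hd0 | hd
  · subst hd0
    have hfb : floatingBody K δ = univ := by
      rw [floatingBody]
      have hempty : {H : Set (Euc 0) | ∃ θ : Euc 0, ∃ t : ℝ, ‖θ‖ = 1 ∧
          H = {x : Euc 0 | t ≤ ⟪x, θ⟫} ∧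
          ENNReal.ofReal (1 - δ) * volume K ≤ volume (H ∩ K)} = ∅ := by
        ext H
        simp only [mem_setOf_eq, mem_empty_iff_false, iff_false, not_exists]
        rintro θ t ⟨hθ, -⟩
        have hθ0 : θ = (0 : Euc 0) := Subsingleton.elim θ 0
        rw [hθ0, norm_zero] at hθ
        norm_num at hθ
      rw [hempty, sInter_empty]
    obtain ⟨x₀, hx₀⟩ := hK.2.2
    refine ⟨by rw [hfb]; exact univ_nonempty, ?_⟩
    have hmem : (1:ℝ) ∈ {lam : ℝ | 1 ≤ lam ∧ ∃ x ∈ interior (K ∩ floatingBody K δ),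
        (fun y => lam⁻¹ • (y - x) + x) '' K ⊆ floatingBody K δ ∧
          floatingBody K δ ⊆ (fun y => lam • (y - x) + x) '' K} := by
      refine ⟨le_refl 1, x₀, ?_, ?_, ?_⟩
      · rw [hfb, inter_univ]; exact hx₀
      · rw [hfb]; exact subset_univ _
      · rw [hfb]
        intro w _
        exact ⟨x₀, interior_subset hx₀, Subsingleton.elim _ _⟩
    have h1 : logHausdorffDist K (floatingBody K δ) ≤ 1 := csInf_le hbdd hmem
    calc logHausdorffDist K (floatingBody K δ) ≤ 1 := h1
      _ ≤ 1 + 8 * δ ^ (((0:ℕ):ℝ))⁻¹ := by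
          simp only [Nat.cast_zero, inv_zero, Real.rpow_zero]
          norm_num
  · obtain ⟨x, hxint, hcp⟩ := exists_centerpoint hK
    have hxK : x ∈ K := interior_subset hxint
    have hε0 : 0 < δ ^ ((d : ℝ)⁻¹) := Real.rpow_pos_of_pos hδ0 _
    set lam : ℝ := 1 + 8 * δ ^ ((d : ℝ)⁻¹) with hlamdef
    have hlam1 : 1 ≤ lam := by rw [hlamdef]; linarith
    have hlam0 : 0 < lam := by linarith
    have hδ1 : δ ≤ 1 := le_trans hδ
      (Real.rpow_le_one_of_one_le_of_nonpos (by norm_num) (neg_nonpos.mpr (Nat.cast_nonneg d)))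
    have hS : (fun y : Euc d => lam⁻¹ • (y - x) + x) '' K ⊆ floatingBody K δ := by
      rintro z ⟨y, hyK, rfl⟩
      rw [floatingBody, mem_sInter]
      rintro H ⟨θ, t, hθn, rfl, hvol⟩
      exact main_halfspace hK hd hδ0 hδ hxK hcp hθn hvol hyK
    have hxfb : x ∈ floatingBody K δ := hS ⟨x, hxK, by simp⟩
    have hxintfb : x ∈ interior (floatingBody K δ) := by
      obtain ⟨ρ, hρ0, hball⟩ := Metric.mem_nhds_iff.mp (mem_interior_iff_mem_nhds.mp hxint)
      have hball2 : ball x (lam⁻¹ * ρ) ⊆ floatingBody K δ := by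
        intro z hz
        apply hS
        refine ⟨x + lam • (z - x), hball ?_, ?_⟩
        · rw [mem_ball, dist_eq_norm, add_sub_cancel_left, norm_smul,
            Real.norm_eq_abs, abs_of_pos hlam0]
          have hz' : ‖z - x‖ < lam⁻¹ * ρ := by
            rw [mem_ball, dist_eq_norm] at hz; exact hz
          calc lam * ‖z - x‖ < lam * (lam⁻¹ * ρ) := mul_lt_mul_of_pos_left hz' hlam0
            _ = ρ := by field_simp
        · show lam⁻¹ • (x + lam • (z - x) - x) + x = z
          rw [add_sub_cancel_left, smul_smul, inv_mul_cancel₀ hlam0.ne', one_smul,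
            sub_add_cancel]
      exact mem_interior_iff_mem_nhds.mpr
        (Filter.mem_of_superset (Metric.ball_mem_nhds x (by positivity)) hball2)
    have hmem : lam ∈ {l : ℝ | 1 ≤ l ∧ ∃ x ∈ interior (K ∩ floatingBody K δ),
        (fun y => l⁻¹ • (y - x) + x) '' K ⊆ floatingBody K δ ∧
          floatingBody K δ ⊆ (fun y => l • (y - x) + x) '' K} := by
      refine ⟨hlam1, x, ?_, hS, ?_⟩
      · rw [interior_inter]; exact ⟨hxint, hxintfb⟩
      · intro z hzfb
        have hzK : z ∈ K := floatingBody_subset hK hδ0 hδ1 hzfb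
        refine ⟨lam⁻¹ • (z - x) + x, ?_, ?_⟩
        · have hIcc : lam⁻¹ ∈ Icc (0:ℝ) 1 := by
            constructor
            · positivity
            · rw [inv_le_one_iff₀]; right; exact hlam1
          have hmemK := hK.2.1.add_smul_sub_mem hxK hzK hIcc
          have heq : x + lam⁻¹ • (z - x) = lam⁻¹ • (z - x) + x := by abel
          rw [heq] at hmemK
          exact hmemK
        · show lam • (lam⁻¹ • (z - x) + x - x) + x = z
          rw [add_sub_cancel_right, smul_smul, mul_inv_cancel₀ hlam0.ne', one_smul,
            sub_add_cancel]
    refine ⟨⟨x, hxfb⟩, ?_⟩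
    exact csInf_le hbdd hmem
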